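/- Let β ≤ 1/2 and κ > 2(1−β), and define M : [0,∞) → ℝ by M(t) := d/dt [ sin((1+t)^κ) (1+t)^{1−2β−κ} ]. Then there is a constant C > 0 such that for all t ≥ 0: |∫_t^∞ ∫_s^∞ M(σ) dσ ds| ≤ C(1+t)^{2−2β−2κ}, and consequently ∫_t^∞ |∫_s^∞ ∫_σ^∞ M(τ) dτ dσ| ds ≤ C'(1+t)^{3−2β−2κ} for some C' > 0, i.e. M satisfies the stabilization condition (M1) (the estimate (stb_inf)) with α = −2β − 2κ + 3 < 0. -/

import Mathlib

open MeasureTheory Filter Topology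

private lemma aux_deriv (a : ℝ) {s : ℝ} (hs : -1 < s) :
    HasDerivAt (fun s : ℝ => (1 + s) ^ a) (a * (1 + s) ^ (a - 1)) s := by
  have h1 : HasDerivAt (fun s : ℝ => 1 + s) 1 s := (hasDerivAt_id s).const_add 1
  have h2 := (Real.hasDerivAt_rpow_const (x := 1 + s) (p := a) (Or.inl (by linarith)))
  have h3 := h2.comp s h1; rw [mul_one] at h3; exact h3

private lemma aux_tendsto {a : ℝ} (ha : a < 0) :
    Tendsto (fun s : ℝ => (1 + s) ^ a) atTop (𝓝 0) := by
  have h1 : Tendsto (fun s : ℝ => 1 + s) atTop atTop :=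
    tendsto_atTop_add_const_left _ 1 tendsto_id
  have h2 := tendsto_rpow_neg_atTop (y := -a) (by linarith)
  simpa [Function.comp_def] using h2.comp h1

private lemma aux_int {e : ℝ} (he : e < -1) {t : ℝ} (ht : -1 < t) :
    IntegrableOn (fun s : ℝ => (1 + s) ^ e) (Set.Ioi t) ∧
      ∫ s in Set.Ioi t, (1 + s) ^ e = (1 + t) ^ (e + 1) / (-(e + 1)) := by
  have he1 : e + 1 ≠ 0 := by linarith
  have hG : ∀ x ∈ Set.Ici t, HasDerivAt (fun s : ℝ => (1 + s) ^ (e + 1) / (e + 1))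
      ((1 + x) ^ e) x := by
    intro x hx
    have hx' : -1 < x := lt_of_lt_of_le ht hx
    have := (aux_deriv (e + 1) hx').div_const (e + 1)
    simpa [mul_div_assoc, mul_div_cancel_left₀ _ he1] using this
  have hpos : ∀ x ∈ Set.Ioi t, (0:ℝ) ≤ (1 + x) ^ e := by
    intro x hx
    have hx' : -1 < x := lt_trans ht hx
    exact Real.rpow_nonneg (by linarith) _
  have hlim : Tendsto (fun s : ℝ => (1 + s) ^ (e + 1) / (e + 1)) atTop (𝓝 0) := by
    simpa using (aux_tendsto (show e + 1 < 0 by linarith)).div_const (e + 1)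
  refine ⟨integrableOn_Ioi_deriv_of_nonneg' hG hpos hlim, ?_⟩
  rw [integral_Ioi_of_hasDerivAt_of_tendsto' hG
    (integrableOn_Ioi_deriv_of_nonneg' hG hpos hlim) hlim]
  rw [zero_sub, div_neg]

/-- Verification of the stabilization condition (M1) (estimate (stb_inf)) for the
Example of Section 2, with the non-trivial exponent `α = -2β - 2κ + 3 < 0`:
`|∫_t^∞ ∫_s^∞ M| ≲ (1+t)^(2-2β-2κ)` and hence
`∫_t^∞ |∫_s^∞ ∫_σ^∞ M| ds ≲ (1+t)^(3-2β-2κ)`. -/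
theorem example_stabilization
    (β κ : ℝ) (hβ : β ≤ 1 / 2) (hκ : 2 * (1 - β) < κ)
    (M : ℝ → ℝ)
    (hM : ∀ t, M t =
      deriv (fun s : ℝ => Real.sin ((1 + s) ^ κ) * (1 + s) ^ (1 - 2 * β - κ)) t)
    -- `IM s = ∫_s^∞ M`, the improper integral being convergent
    (IM : ℝ → ℝ)
    (hIM : ∀ s ≥ (0:ℝ),
      Tendsto (fun R => ∫ σ in s..R, M σ) atTop (𝓝 (IM s))) :
    (-2 * β - 2 * κ + 3 < 0) ∧
    ∃ C > (0:ℝ), ∃ C' > (0:ℝ), ∀ t ≥ (0:ℝ),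
      IntegrableOn IM (Set.Ioi t) ∧
      |∫ s in Set.Ioi t, IM s| ≤ C * (1 + t) ^ (2 - 2 * β - 2 * κ) ∧
      (∫⁻ s in Set.Ioi t, ENNReal.ofReal |∫ σ in Set.Ioi s, IM σ|)
        ≤ ENNReal.ofReal (C' * (1 + t) ^ (3 - 2 * β - 2 * κ)) := by
  have hκ0 : (0:ℝ) < κ := by linarith
  have hκne : κ ≠ 0 := ne_of_gt hκ0
  obtain ⟨p, hp_def⟩ : ∃ p : ℝ, p = 1 - 2 * β - κ := ⟨_, rfl⟩
  obtain ⟨q, hq_def⟩ : ∃ q : ℝ, q = 2 - 2 * β - 2 * κ := ⟨_, rfl⟩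
  have hp : p < -1 := by rw [hp_def]; linarith
  have hq : q < -1 := by rw [hq_def]; linarith
  have hq1 : q - 1 < -1 := by linarith
  have hq2 : q + 1 < 0 := by linarith
  have hqne : q ≠ 0 := by linarith
  have hq2ne : q + 1 ≠ 0 := ne_of_lt hq2
  obtain ⟨f, hf_def⟩ : ∃ f : ℝ → ℝ,
    f = fun s : ℝ => Real.sin ((1 + s) ^ κ) * (1 + s) ^ p := ⟨_, rfl⟩
  obtain ⟨h, hh_def⟩ : ∃ h : ℝ → ℝ,
    h = fun s : ℝ => -(1 / κ) * Real.cos ((1 + s) ^ κ) * (1 + s) ^ q := ⟨_, rfl⟩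
  obtain ⟨r, hr_def⟩ : ∃ r : ℝ → ℝ,
    r = fun s : ℝ => -(q / κ) * Real.cos ((1 + s) ^ κ) * (1 + s) ^ (q - 1) := ⟨_, rfl⟩
  -- derivative of f
  have hfd : ∀ x : ℝ, -1 < x → HasDerivAt f
      (Real.cos ((1 + x) ^ κ) * (κ * (1 + x) ^ (κ - 1)) * (1 + x) ^ p
        + Real.sin ((1 + x) ^ κ) * (p * (1 + x) ^ (p - 1))) x := by
    intro x hx
    rw [hf_def]
    exact ((aux_deriv κ hx).sin).mul (aux_deriv p hx)
  have hMF : ∀ x : ℝ, -1 < x → M x =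
      Real.cos ((1 + x) ^ κ) * (κ * (1 + x) ^ (κ - 1)) * (1 + x) ^ p
        + Real.sin ((1 + x) ^ κ) * (p * (1 + x) ^ (p - 1)) := by
    intro x hx
    rw [hM x, ← hp_def, ← hf_def]
    exact (hfd x hx).deriv
  have hcrpow : ∀ (a : ℝ) (x : ℝ), -1 < x → ContinuousAt (fun s : ℝ => (1 + s) ^ a) x :=
    fun a x hx => (aux_deriv a hx).continuousAt
  have hccos : ∀ x : ℝ, -1 < x → ContinuousAt (fun s : ℝ => Real.cos ((1 + s) ^ κ)) x :=
    fun x hx => ((aux_deriv κ hx).cos).continuousAt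
  have hcsin : ∀ x : ℝ, -1 < x → ContinuousAt (fun s : ℝ => Real.sin ((1 + s) ^ κ)) x :=
    fun x hx => ((aux_deriv κ hx).sin).continuousAt
  -- f tends to 0
  have hfb : ∀ x : ℝ, -1 < x → ‖f x‖ ≤ (1 + x) ^ p := by
    intro x hx
    have h1 : (0:ℝ) ≤ 1 + x := by linarith
    simp only [hf_def, Real.norm_eq_abs, abs_mul]
    rw [abs_of_nonneg (Real.rpow_nonneg h1 p)]
    exact mul_le_of_le_one_left (Real.rpow_nonneg h1 p) (Real.abs_sin_le_one _)
  have hf0 : Tendsto f atTop (𝓝 0) := by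
    apply squeeze_zero_norm' ?_ (aux_tendsto (show p < 0 by linarith))
    filter_upwards [eventually_ge_atTop (0:ℝ)] with x hx
    exact hfb x (by linarith)
  -- IM = -f on [0, ∞)
  have keyA : ∀ s : ℝ, 0 ≤ s → IM s = -f s := by
    intro s hs
    refine tendsto_nhds_unique (hIM s hs) ?_
    have h2 : Tendsto (fun R => f R - f s) atTop (𝓝 (0 - f s)) := hf0.sub_const (f s)
    rw [zero_sub] at h2
    refine Tendsto.congr' ?_ h2
    filter_upwards [eventually_ge_atTop s] with R hR
    symm
    have hsub : ∀ x ∈ Set.uIcc s R, (-1:ℝ) < x := by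
      intro x hx
      rw [Set.uIcc_of_le hR] at hx
      linarith [hx.1]
    have hint : IntervalIntegrable M volume s R := by
      apply ContinuousOn.intervalIntegrable
      apply ContinuousOn.congr (f := fun x : ℝ =>
        Real.cos ((1 + x) ^ κ) * (κ * (1 + x) ^ (κ - 1)) * (1 + x) ^ p
        + Real.sin ((1 + x) ^ κ) * (p * (1 + x) ^ (p - 1)))
      · intro x hx
        have hx' := hsub x hx
        exact ((((hccos x hx').mul
          (continuousAt_const.mul (hcrpow (κ-1) x hx'))).mul (hcrpow p x hx')).add
          ((hcsin x hx').mul (continuousAt_const.mul (hcrpow (p-1) x hx')))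
          ).continuousWithinAt
      · intro x hx
        exact hMF x (hsub x hx)
    exact intervalIntegral.integral_eq_sub_of_hasDerivAt
      (fun x hx => by rw [hMF x (hsub x hx)]; exact hfd x (hsub x hx)) hint
  -- derivative of h
  have hhd : ∀ x : ℝ, -1 < x → HasDerivAt h (f x + r x) x := by
    intro x hx
    have h1 : (0:ℝ) < 1 + x := by linarith
    have d1 := (((aux_deriv κ hx).cos).const_mul (-(1/κ))).mul (aux_deriv q hx)
    rw [hh_def]
    convert d1 using 1
    · rfl
    · rfl
    · rfl
    have hadd : (1 + x) ^ (κ - 1) * (1 + x) ^ q = (1 + x) ^ p := by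
      rw [← Real.rpow_add h1]
      congr 1
      rw [hp_def, hq_def]; ring
    simp only [hf_def, hr_def]
    rw [← hadd]
    field_simp
  -- h tends to 0
  have hhb : ∀ x : ℝ, -1 < x → ‖h x‖ ≤ (1/κ) * (1 + x) ^ q := by
    intro x hx
    have h1 : (0:ℝ) ≤ 1 + x := by linarith
    have h2 : (0:ℝ) ≤ (1 + x) ^ q := Real.rpow_nonneg h1 q
    simp only [hh_def, Real.norm_eq_abs, abs_mul, abs_neg]
    rw [abs_of_nonneg (Real.rpow_nonneg h1 q),
      abs_of_nonneg (by positivity : (0:ℝ) ≤ 1/κ), mul_assoc]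
    have h3 := mul_le_mul_of_nonneg_right (Real.abs_cos_le_one ((1 + x) ^ κ)) h2
    calc (1/κ) * (|Real.cos ((1 + x) ^ κ)| * (1 + x) ^ q)
        ≤ (1/κ) * (1 * (1 + x) ^ q) := by
          apply mul_le_mul_of_nonneg_left h3 (by positivity)
      _ = (1/κ) * (1 + x) ^ q := by ring
  have hh0 : Tendsto h atTop (𝓝 0) := by
    have h2 : Tendsto (fun s : ℝ => (1/κ) * (1 + s) ^ q) atTop (𝓝 ((1/κ) * 0)) :=
      (aux_tendsto (show q < 0 by linarith)).const_mul (1/κ)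
    rw [mul_zero] at h2
    apply squeeze_zero_norm' ?_ h2
    filter_upwards [eventually_ge_atTop (0:ℝ)] with x hx
    exact hhb x (by linarith)
  -- bound on r
  have hrb : ∀ x : ℝ, -1 < x → ‖r x‖ ≤ (-(q/κ)) * (1 + x) ^ (q - 1) := by
    intro x hx
    have h1 : (0:ℝ) ≤ 1 + x := by linarith
    have h2 : (0:ℝ) ≤ (1 + x) ^ (q - 1) := Real.rpow_nonneg h1 _
    have hqκ : q / κ ≤ 0 := le_of_lt (div_neg_of_neg_of_pos (by linarith) hκ0)
    simp only [hr_def, Real.norm_eq_abs, abs_mul, abs_neg]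
    rw [abs_of_nonneg h2, abs_of_nonpos hqκ, mul_assoc]
    have h3 := mul_le_mul_of_nonneg_right (Real.abs_cos_le_one ((1 + x) ^ κ)) h2
    calc (-(q/κ)) * (|Real.cos ((1 + x) ^ κ)| * (1 + x) ^ (q - 1))
        ≤ (-(q/κ)) * (1 * (1 + x) ^ (q - 1)) := by
          apply mul_le_mul_of_nonneg_left h3 (by nlinarith)
      _ = (-(q/κ)) * (1 + x) ^ (q - 1) := by ring
  -- main estimate
  have main : ∀ t : ℝ, 0 ≤ t → IntegrableOn IM (Set.Ioi t) ∧
      |∫ s in Set.Ioi t, IM s| ≤ (2/κ) * (1 + t) ^ q := by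
    intro t ht
    have ht' : (-1:ℝ) < t := by linarith
    have hfc : ∀ x : ℝ, -1 < x → ContinuousAt f x := by
      intro x hx; rw [hf_def]; exact (hcsin x hx).mul (hcrpow p x hx)
    have hrc : ∀ x : ℝ, -1 < x → ContinuousAt r x := by
      intro x hx; rw [hr_def]
      exact (continuousAt_const.mul (hccos x hx)).mul (hcrpow (q-1) x hx)
    have hintf : IntegrableOn f (Set.Ioi t) := by
      refine Integrable.mono' (aux_int hp ht').1
        (ContinuousOn.aestronglyMeasurable
          (fun x hx => (hfc x (lt_trans ht' hx)).continuousWithinAt) measurableSet_Ioi) ?_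
      filter_upwards [ae_restrict_mem measurableSet_Ioi] with x hx
      exact hfb x (lt_trans ht' hx)
    have hintr : IntegrableOn r (Set.Ioi t) := by
      refine Integrable.mono' ((aux_int hq1 ht').1.const_mul (-(q/κ)))
        (ContinuousOn.aestronglyMeasurable
          (fun x hx => (hrc x (lt_trans ht' hx)).continuousWithinAt) measurableSet_Ioi) ?_
      filter_upwards [ae_restrict_mem measurableSet_Ioi] with x hx
      exact hrb x (lt_trans ht' hx)
    have hintIM : IntegrableOn IM (Set.Ioi t) :=
      IntegrableOn.congr_fun hintf.neg
        (fun x hx => (keyA x (le_trans ht (le_of_lt hx))).symm) measurableSet_Ioi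
    refine ⟨hintIM, ?_⟩
    have hD : ∀ x ∈ Set.Ici t, HasDerivAt (fun s => -(h s)) (-(f x + r x)) x :=
      fun x hx => (hhd x (lt_of_lt_of_le ht' hx)).neg
    have hDint : IntegrableOn (fun x => -(f x + r x)) (Set.Ioi t) := (hintf.add hintr).neg
    have hI1 : ∫ x in Set.Ioi t, -(f x + r x) = 0 - (-(h t)) :=
      integral_Ioi_of_hasDerivAt_of_tendsto' hD hDint (by simpa using hh0.neg)
    have hI2 : ∫ s in Set.Ioi t, IM s
        = (∫ x in Set.Ioi t, -(f x + r x)) + ∫ x in Set.Ioi t, r x := by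
      rw [← integral_add hDint hintr]
      refine setIntegral_congr_fun measurableSet_Ioi fun x hx => ?_
      rw [keyA x (le_trans ht (le_of_lt hx))]
      ring
    have hrI : |∫ x in Set.Ioi t, r x| ≤ (1/κ) * (1 + t) ^ q := by
      have s0 : |∫ x in Set.Ioi t, r x| ≤ ∫ x in Set.Ioi t, ‖r x‖ := by
        rw [← Real.norm_eq_abs]
        exact norm_integral_le_integral_norm _
      have s1 : (∫ x in Set.Ioi t, ‖r x‖)
          ≤ ∫ x in Set.Ioi t, (-(q/κ)) * (1 + x) ^ (q-1) :=
        setIntegral_mono_on hintr.norm ((aux_int hq1 ht').1.const_mul (-(q/κ)))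
          measurableSet_Ioi fun x hx => hrb x (lt_trans ht' hx)
      have s2 : ∫ x in Set.Ioi t, (-(q/κ)) * (1 + x) ^ (q-1)
          = (1/κ) * (1 + t) ^ q := by
        rw [integral_const_mul, (aux_int hq1 ht').2]
        have he : q - 1 + 1 = q := by ring
        rw [he]
        field_simp
      linarith
    have hhI : |h t| ≤ (1/κ) * (1 + t) ^ q := by
      have := hhb t ht'
      rwa [Real.norm_eq_abs] at this
    rw [hI2, hI1]
    calc |0 - -h t + ∫ x in Set.Ioi t, r x|
        ≤ |0 - -h t| + |∫ x in Set.Ioi t, r x| := abs_add_le _ _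
      _ = |h t| + |∫ x in Set.Ioi t, r x| := by rw [zero_sub, neg_neg]
      _ ≤ (1/κ) * (1 + t) ^ q + (1/κ) * (1 + t) ^ q := by linarith
      _ = (2/κ) * (1 + t) ^ q := by ring
  -- assemble
  refine ⟨by linarith, 2/κ, by positivity,
    (2/κ) / (-(q+1)), div_pos (by positivity) (by linarith), fun t ht => ?_⟩
  have ht' : (-1:ℝ) < t := by linarith
  obtain ⟨hint, hbd⟩ := main t ht
  rw [hq_def] at hbd
  refine ⟨hint, hbd, ?_⟩
  have h31 : 3 - 2 * β - 2 * κ = q + 1 := by rw [hq_def]; ring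
  rw [h31]
  calc ∫⁻ s in Set.Ioi t, ENNReal.ofReal |∫ σ in Set.Ioi s, IM σ|
      ≤ ∫⁻ s in Set.Ioi t, ENNReal.ofReal ((2/κ) * (1 + s) ^ q) := by
        refine lintegral_mono_ae ?_
        filter_upwards [ae_restrict_mem measurableSet_Ioi] with s hs
        exact ENNReal.ofReal_le_ofReal (main s (le_trans ht (le_of_lt hs))).2
    _ = ENNReal.ofReal (∫ s in Set.Ioi t, (2/κ) * (1 + s) ^ q) := by
        refine (ofReal_integral_eq_lintegral_ofReal
          ((aux_int hq ht').1.const_mul (2/κ)) ?_).symm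
        filter_upwards [ae_restrict_mem measurableSet_Ioi] with s hs
        have h1 : (0:ℝ) ≤ 1 + s := by have := hs.out; linarith
        positivity
    _ ≤ ENNReal.ofReal ((2/κ) / (-(q+1)) * (1 + t) ^ (q + 1)) := by
        apply ENNReal.ofReal_le_ofReal
        rw [integral_const_mul, (aux_int hq ht').2]
        apply le_of_eq
        field_simp
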